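/- If an edge uv of a graph with a 2-bisection c is replaced by a single diamond D (yielding graph G'), then c can be extended to a 2-bisection of G': if c(u) = c(v), colour the two degree-2 vertices of D with the colour opposite to c(u) and the two degree-3 vertices of D with colour c(u) if needed to balance; if c(u) ≠ c(v), use an asymmetric colouring of D. In particular, G' admits a 2-bisection. -/

import Mathlib

open SimpleGraph Finset

/-- The subgraph of `G` consisting of edges whose endpoints receive the same
colour under the 2-colouring `c`. Its connected components are the
monochromatic components of the colouring. -/
def monoSubgraph {V : Type*} (G : SimpleGraph V) (c : V → Bool) : SimpleGraph V where
  Adj u v := G.Adj u v ∧ c u = c v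
  symm := ⟨fun u v h => ⟨h.1.symm, h.2.symm⟩⟩
  loopless := ⟨fun v h => G.loopless.irrefl v h.1⟩

/-- `c` is a `k`-bisection of `G`: the two colour classes have the same size and
every monochromatic component has at most `k` vertices. -/
def IsKBisection {V : Type*} (G : SimpleGraph V) (c : V → Bool) (k : ℕ) : Prop :=
  {v | c v = true}.ncard = {v | c v = false}.ncard ∧
    ∀ v : V, {w | (monoSubgraph G c).Reachable v w}.ncard ≤ k

/-- `G` is cubic: every vertex has degree 3. -/
def IsCubic {V : Type*} (G : SimpleGraph V) : Prop :=
  ∀ v : V, (G.neighborSet v).ncard = 3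

/-- `G` is bridgeless: no edge is a cut-edge. -/
def Bridgeless {V : Type*} (G : SimpleGraph V) : Prop :=
  ∀ e ∈ G.edgeSet, ¬ G.IsBridge e

/-- `G` is claw-free: no induced subgraph isomorphic to `K_{1,3}`. -/
def ClawFree {V : Type*} (G : SimpleGraph V) : Prop :=
  ¬ ∃ v a b c : V, a ≠ b ∧ a ≠ c ∧ b ≠ c ∧
    G.Adj v a ∧ G.Adj v b ∧ G.Adj v c ∧ ¬ G.Adj a b ∧ ¬ G.Adj a c ∧ ¬ G.Adj b c

/-- The diamond graph `K₄ - e` on `Fin 4`, with non-adjacent (degree-2)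
vertices `0` and `1` and adjacent (degree-3) vertices `2` and `3`. -/
def diamondGraph : SimpleGraph (Fin 4) :=
  SimpleGraph.fromEdgeSet {s(0, 2), s(0, 3), s(1, 2), s(1, 3), s(2, 3)}

/-- `f` realises the diamond graph as an induced subgraph of `G`. -/
def IsInducedDiamond {V : Type*} (G : SimpleGraph V) (f : Fin 4 → V) : Prop :=
  Function.Injective f ∧ ∀ i j, G.Adj (f i) (f j) ↔ diamondGraph.Adj i j

/-- One direction of the adjacency relation of the graph obtained from `H` by
replacing the edge `uv` by a single diamond: the edge `uv` is deleted, a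
diamond on `Fin 4` is added, `u` is joined to its degree-2 vertex `0` and `v`
to its degree-2 vertex `1`. -/
def diamondReplRel {V : Type*} (H : SimpleGraph V) (u v : V) :
    V ⊕ Fin 4 → V ⊕ Fin 4 → Prop
  | Sum.inl a, Sum.inl b => H.Adj a b ∧ ¬(a = u ∧ b = v) ∧ ¬(a = v ∧ b = u)
  | Sum.inl a, Sum.inr j => (a = u ∧ j = 0) ∨ (a = v ∧ j = 1)
  | Sum.inr _, Sum.inl _ => False
  | Sum.inr j, Sum.inr j' => diamondGraph.Adj j j'

/-- The graph obtained from `H` by replacing the edge `uv` by a diamond. -/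
def diamondRepl {V : Type*} (H : SimpleGraph V) (u v : V) : SimpleGraph (V ⊕ Fin 4) where
  Adj x y := x ≠ y ∧ (diamondReplRel H u v x y ∨ diamondReplRel H u v y x)
  symm := ⟨fun x y h => ⟨h.1.symm, h.2.symm⟩⟩
  loopless := ⟨fun x h => h.1 rfl⟩

/- auxiliary -/
def dAdjB : Fin 4 → Fin 4 → Bool :=
  ![![false,false,true,true],![false,false,true,true],![true,true,false,true],![true,true,true,false]]

lemma diamond_adj_iff (i j : Fin 4) : diamondGraph.Adj i j ↔ dAdjB i j = true := by
  fin_cases i <;> fin_cases j <;>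
    simp [diamondGraph, dAdjB, Sym2.eq_iff] <;> rfl

lemma reach_closed {α : Type*} {G : SimpleGraph α} {s : Set α}
    (hs : ∀ ⦃x⦄, x ∈ s → ∀ ⦃y⦄, G.Adj x y → y ∈ s) :
    ∀ ⦃a w⦄, a ∈ s → G.Reachable a w → w ∈ s := by
  have key : ∀ ⦃a w : α⦄ (p : G.Walk a w), a ∈ s → w ∈ s := by
    intro a w p
    induction p with
    | nil => exact id
    | cons h _ ih => exact fun ha => ih (hs ha h)
  rintro a w ha ⟨p⟩
  exact key p ha

lemma ncard_g (a b e : Bool) : {j : Fin 4 | ![!a,!b,a,b] j = e}.ncard = 2 := by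
  have h : {j : Fin 4 | ![!a,!b,a,b] j = e} =
      ((Finset.univ.filter (fun j => ![!a,!b,a,b] j = e)) : Finset (Fin 4)) := by
    ext j; simp
  rw [h, Set.ncard_coe_finset]
  cases a <;> cases b <;> cases e <;> decide

/-- A 2-bisection `c` of `H` extends to a 2-bisection of the graph `G'`
obtained by replacing an edge `uv` by a diamond; in particular `G'` admits a
2-bisection. -/
theorem diamondRepl_two_bisection {V : Type*} [Fintype V] [DecidableEq V]
    (H : SimpleGraph V) (u v : V) (huv : H.Adj u v)
    (c : V → Bool) (hc : IsKBisection H c 2) :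
    ∃ c' : V ⊕ Fin 4 → Bool, (∀ w : V, c' (Sum.inl w) = c w) ∧
      IsKBisection (diamondRepl H u v) c' 2 := by
  classical
  set g : Fin 4 → Bool := ![!c u, !c v, c u, c v] with hg
  set φ : Fin 4 → Fin 4 := fun j => if c u = c v then ![0,1,3,2] j else ![3,2,1,0] j with hφ
  refine ⟨Sum.elim c g, fun w => rfl, ?_, ?_⟩
  · -- balance
    have hsplit : ∀ b : Bool, {x : V ⊕ Fin 4 | Sum.elim c g x = b} =
        Sum.inl '' {w | c w = b} ∪ Sum.inr '' {j | g j = b} := by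
      intro b
      ext x
      cases x with
      | inl a => simp
      | inr j => simp
    have hdisj : ∀ b : Bool, Disjoint (Sum.inl '' {w | c w = b} : Set (V ⊕ Fin 4))
        (Sum.inr '' {j | g j = b}) := by
      intro b
      rw [Set.disjoint_left]
      rintro x ⟨a, _, rfl⟩ ⟨j, _, h⟩
      exact Sum.inl_ne_inr h.symm
    have hcardb : ∀ b : Bool, {x : V ⊕ Fin 4 | Sum.elim c g x = b}.ncard =
        {w | c w = b}.ncard + 2 := by
      intro b
      rw [hsplit b, Set.ncard_union_eq (hdisj b) (Set.toFinite _) (Set.toFinite _),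
        Set.ncard_image_of_injective _ Sum.inl_injective,
        Set.ncard_image_of_injective _ Sum.inr_injective]
      congr 1
      rw [hg]
      exact ncard_g (c u) (c v) b
    rw [hcardb true, hcardb false, hc.1]
  · -- components
    intro x
    cases x with
    | inl a =>
      have hsub : {w | (monoSubgraph (diamondRepl H u v) (Sum.elim c g)).Reachable (Sum.inl a) w}
          ⊆ Sum.inl '' {b | (monoSubgraph H c).Reachable a b} := by
        intro w hw
        refine reach_closed ?_ ⟨a, Reachable.refl a, rfl⟩ hw
        rintro x ⟨b, hb, rfl⟩ y hxy
        obtain ⟨⟨hne, hrel⟩, hcol⟩ := hxy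
        cases y with
        | inl b' =>
          refine ⟨b', hb.trans ⟨Walk.cons ⟨?_, hcol⟩ Walk.nil⟩, rfl⟩
          rcases hrel with ⟨h, -, -⟩ | ⟨h, -, -⟩
          · exact h
          · exact h.symm
        | inr j =>
          exfalso
          rcases hrel with (⟨rfl, rfl⟩ | ⟨rfl, rfl⟩) | h
          · simp [g] at hcol
          · simp [g] at hcol
          · exact h
      calc _ ≤ (Sum.inl '' {b | (monoSubgraph H c).Reachable a b}).ncard :=
            Set.ncard_le_ncard hsub (Set.toFinite _)
        _ = {b | (monoSubgraph H c).Reachable a b}.ncard :=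
            Set.ncard_image_of_injective _ Sum.inl_injective
        _ ≤ 2 := hc.2 a
    | inr j =>
      have key : ∀ j' j'' : Fin 4, (j' = j ∨ j' = φ j) → dAdjB j' j'' = true →
          g j' = g j'' → (j'' = j ∨ j'' = φ j) := by
        cases hu : c u <;> cases hv : c v <;>
          · simp only [hg, hφ, hu, hv]
            revert j; decide
      have hsub : {w | (monoSubgraph (diamondRepl H u v) (Sum.elim c g)).Reachable (Sum.inr j) w}
          ⊆ Sum.inr '' ({j, φ j} : Set (Fin 4)) := by
        intro w hw
        refine reach_closed ?_ ⟨j, Or.inl rfl, rfl⟩ hw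
        rintro x ⟨j', hj', rfl⟩ y hxy
        obtain ⟨⟨hne, hrel⟩, hcol⟩ := hxy
        cases y with
        | inl b' =>
          exfalso
          rcases hrel with h | (⟨rfl, rfl⟩ | ⟨rfl, rfl⟩)
          · exact h
          · simp [g] at hcol
          · simp [g] at hcol
        | inr j'' =>
          have hadj : diamondGraph.Adj j' j'' := by
            rcases hrel with h | h
            · exact h
            · exact h.symm
          exact ⟨j'', key j' j'' hj' ((diamond_adj_iff _ _).1 hadj) hcol, rfl⟩
      calc _ ≤ (Sum.inr '' ({j, φ j} : Set (Fin 4))).ncard :=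
            Set.ncard_le_ncard hsub (Set.toFinite _)
        _ = ({j, φ j} : Set (Fin 4)).ncard :=
            Set.ncard_image_of_injective _ Sum.inr_injective
        _ ≤ 2 := by
            refine le_trans (Set.ncard_insert_le _ _) ?_
            simp
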